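/- Let K be a finitely generated group and let G be a finite group acting on a finite set X. Let μ be a ℚ-valued function on the set of all subgroups of G satisfying, for every subgroup P ≤ G, Σ_{H : P ≤ H ≤ G} μ(H) = |X^P|. Then χ_K(X;G) = Σ_{H ≤ G} (|Hom(K×ℤ, H)|/|G|) · μ(H) = Σ_{H ≤ G} (|H|/|G|) · |Hom(K,H)/H| · μ(H), where the sums run over all subgroups H of G, Hom(K×ℤ,H) is the set of group homomorphisms K×ℤ → H, and |Hom(K,H)/H| is the number of orbits of the conjugation action of H on Hom(K,H). -/

import Mathlib

open MulAction in
instance : AddGroup.FG ℤ :=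
  AddGroup.fg_iff.mpr ⟨{1}, Int.addSubgroupClosure_one, Set.finite_singleton 1⟩

open MulAction

lemma finite_monoidHom (L G : Type*) [Group L] [Group.FG L] [Group G] [Finite G] :
    Finite (L →* G) := by
  obtain ⟨S, hS, hSfin⟩ := Group.fg_iff.mp ‹_›
  haveI : Finite S := hSfin
  refine Finite.of_injective (fun φ => (fun s : S => φ s)) ?_
  intro f g h
  exact MonoidHom.eq_of_eqOn_dense hS (fun x hx => congrFun h ⟨x, hx⟩)

lemma finite_prodHom (K G : Type*) [Group K] [Group.FG K] [Group G] [Finite G] :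
    Finite ((K × Multiplicative ℤ) →* G) := by
  haveI := finite_monoidHom K G
  haveI := finite_monoidHom (Multiplicative ℤ) G
  refine Finite.of_injective (fun φ =>
    (φ.comp (MonoidHom.inl K (Multiplicative ℤ)), φ.comp (MonoidHom.inr K (Multiplicative ℤ)))) ?_
  intro f g h
  obtain ⟨h1, h2⟩ := Prod.mk.injEq .. ▸ h
  ext ⟨k, n⟩
  have e1 : f (k, 1) = g (k, 1) := DFunLike.congr_fun h1 k
  have e2 : f (1, n) = g (1, n) := DFunLike.congr_fun h2 n
  have : (k, n) = (k, (1 : Multiplicative ℤ)) * (1, n) := by simp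
  rw [this, map_mul, map_mul, e1, e2]

lemma card_hom_range_le (L G : Type*) [Group L] [Group G] (H : Subgroup G) :
    Nat.card {φ : L →* G // φ.range ≤ H} = Nat.card (L →* H) := by
  refine Nat.card_congr
    { toFun := fun φ => φ.1.codRestrict H (fun x => φ.2 ⟨x, rfl⟩)
      invFun := fun ψ => ⟨H.subtype.comp ψ, by rintro _ ⟨l, rfl⟩; exact (ψ l).2⟩
      left_inv := fun φ => by ext l; rfl
      right_inv := fun ψ => by ext l; rfl }

lemma card_fixed {G X L : Type*} [Group G] [MulAction G X] [Group L] (φ : L →* G) :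
    Nat.card {x : X // ∀ k, φ k • x = x} = Nat.card (fixedPoints φ.range X) := by
  apply Nat.card_congr
  apply Equiv.subtypeEquivRight
  intro x
  constructor
  · rintro h ⟨g, l, rfl⟩; exact h l
  · intro h l; exact h ⟨φ l, l, rfl⟩


/-- The generalized orbifold Euler characteristic `χ_K(X;G)` associated to a group `K`:
`(1/|G|) Σ_{φ ∈ Hom(K×ℤ,G)} |X^{⟨φ⟩}|`. -/
noncomputable def chiGen (K : Type*) [Group K] (G : Type*) [Group G] (X : Type*)
    [MulAction G X] : ℚ :=
  (Nat.card G : ℚ)⁻¹ *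
    ∑ᶠ φ : (K × Multiplicative ℤ) →* G,
      (Nat.card {x : X // ∀ k, φ k • x = x} : ℚ)

/-- `G` acts on the set of group homomorphisms `K →* G` by conjugation. -/
instance homConjAction (K G : Type*) [Group K] [Group G] : MulAction G (K →* G) where
  smul g φ := ((MulAut.conj g).toMonoidHom.comp φ)
  one_smul φ := by
    ext x
    show (MulAut.conj 1) (φ x) = φ x
    simp
  mul_smul g h φ := by
    ext x
    show (MulAut.conj (g * h)) (φ x) = (MulAut.conj g) ((MulAut.conj h) (φ x))
    simp

open MulAction in
lemma smul_hom_apply {K G : Type*} [Group K] [Group G] (g : G) (φ : K →* G) (k : K) :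
    (g • φ) k = g * φ k * g⁻¹ := rfl

noncomputable def homZEquiv (K H : Type*) [Group K] [Group H] :
    ((K × Multiplicative ℤ) →* H) ≃ Σ h : H, (fixedBy (K →* H) h) where
  toFun φ := ⟨φ (1, Multiplicative.ofAdd 1), φ.comp (MonoidHom.inl K (Multiplicative ℤ)), by
    rw [mem_fixedBy]
    ext k
    rw [smul_hom_apply, MonoidHom.comp_apply]
    have : φ (1, Multiplicative.ofAdd 1) * φ ((MonoidHom.inl K (Multiplicative ℤ)) k)
        = φ ((MonoidHom.inl K (Multiplicative ℤ)) k) * φ (1, Multiplicative.ofAdd 1) := by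
      rw [← map_mul, ← map_mul]
      congr 1
      simp [Prod.ext_iff]
    rw [this]
    group⟩
  invFun p := MonoidHom.noncommCoprod p.2.1 (zpowersHom H p.1) (by
    intro k n
    have hc : p.1 * p.2.1 k * p.1⁻¹ = p.2.1 k := by
      conv_rhs => rw [← p.2.2]
      rfl
    have hc' : Commute p.1 (p.2.1 k) := by
      rw [Commute, SemiconjBy]
      calc p.1 * p.2.1 k = (p.1 * p.2.1 k * p.1⁻¹) * p.1 := by group
        _ = p.2.1 k * p.1 := by rw [hc]
    simpa [zpowersHom_apply] using (hc'.symm.zpow_right (Multiplicative.toAdd n)))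
  left_inv φ := by
    ext ⟨k, n⟩
    rw [MonoidHom.noncommCoprod_apply]
    simp only [zpowersHom_apply, MonoidHom.comp_apply, MonoidHom.inl_apply]
    rw [← map_zpow, ← map_mul]
    congr 1
    simp [Prod.ext_iff, ← ofAdd_zsmul]
  right_inv := by
    rintro ⟨h, ψ, hψ⟩
    refine Sigma.subtype_ext ?_ ?_
    · simp [MonoidHom.noncommCoprod_apply]
    · ext k
      simp [MonoidHom.noncommCoprod_apply]

lemma card_homZ (K H : Type*) [Group K] [Group.FG K] [Group H] [Finite H] :
    Nat.card ((K × Multiplicative ℤ) →* H) =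
      Nat.card H * Nat.card (Quotient (orbitRel H (K →* H))) := by
  classical
  haveI : Finite (K →* H) := finite_monoidHom K H
  haveI : Finite ((K × Multiplicative ℤ) →* H) := finite_prodHom K H
  haveI : Fintype H := Fintype.ofFinite H
  haveI : Fintype (K →* H) := Fintype.ofFinite _
  haveI : ∀ h : H, Fintype (fixedBy (K →* H) h) := fun h => Fintype.ofFinite _
  haveI : Fintype (Quotient (orbitRel H (K →* H))) := Fintype.ofFinite _
  haveI : Fintype ((K × Multiplicative ℤ) →* H) := Fintype.ofFinite _
  rw [Nat.card_eq_fintype_card, Nat.card_eq_fintype_card, Nat.card_eq_fintype_card,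
    Fintype.card_congr (homZEquiv K H), Fintype.card_sigma,
    MulAction.sum_card_fixedBy_eq_card_orbits_mul_card_group, mul_comm]


/-- **Lemma 2-2.** With the Möbius function `μ` on subgroups of `G` determined by
`Σ_{P ≤ H ≤ G} μ(H) = |X^P|`, one has
`χ_K(X;G) = Σ_{H≤G} (|Hom(K×ℤ,H)|/|G|)·μ(H) = Σ_{H≤G} (|H|/|G|)·|Hom(K,H)/H|·μ(H)`. -/
theorem chiGen_moebius (K : Type) [Group K] [Group.FG K]
    (G X : Type) [Group G] [Finite G] [MulAction G X] [Finite X]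
    (μ : Subgroup G → ℚ)
    (hμ : ∀ P : Subgroup G,
      (∑ᶠ (H : Subgroup G) (_ : P ≤ H), μ H) =
        (Nat.card (MulAction.fixedPoints P X) : ℚ)) :
    chiGen K G X =
        ∑ᶠ H : Subgroup G,
          (Nat.card ((K × Multiplicative ℤ) →* H) : ℚ) / (Nat.card G : ℚ) * μ H ∧
      chiGen K G X =
        ∑ᶠ H : Subgroup G,
          (Nat.card H : ℚ) / (Nat.card G : ℚ) *
            (Nat.card (Quotient (MulAction.orbitRel H (K →* H))) : ℚ) * μ H := by
  classical
  haveI : Finite ((K × Multiplicative ℤ) →* G) := finite_prodHom K G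
  haveI : Fintype ((K × Multiplicative ℤ) →* G) := Fintype.ofFinite _
  haveI : Fintype (Subgroup G) := Fintype.ofFinite _
  -- the key pointwise identity
  have key : ∀ φ : (K × Multiplicative ℤ) →* G,
      (Nat.card {x : X // ∀ k, φ k • x = x} : ℚ) =
        ∑ H : Subgroup G, if φ.range ≤ H then μ H else 0 := by
    intro φ
    rw [card_fixed, ← hμ φ.range, finsum_eq_sum_of_fintype]
    exact Finset.sum_congr rfl (fun H _ => finsum_eq_if)
  -- first form
  have first : chiGen K G X =
      ∑ H : Subgroup G,
        (Nat.card ((K × Multiplicative ℤ) →* H) : ℚ) / (Nat.card G : ℚ) * μ H := by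
    unfold chiGen
    rw [finsum_eq_sum_of_fintype]
    calc (Nat.card G : ℚ)⁻¹ * ∑ φ : (K × Multiplicative ℤ) →* G,
          (Nat.card {x : X // ∀ k, φ k • x = x} : ℚ)
        = (Nat.card G : ℚ)⁻¹ * ∑ φ : (K × Multiplicative ℤ) →* G,
            ∑ H : Subgroup G, if φ.range ≤ H then μ H else 0 := by
          rw [Finset.sum_congr rfl (fun φ _ => key φ)]
      _ = (Nat.card G : ℚ)⁻¹ * ∑ H : Subgroup G,
            ∑ φ : (K × Multiplicative ℤ) →* G, if φ.range ≤ H then μ H else 0 := by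
          rw [Finset.sum_comm]
      _ = ∑ H : Subgroup G,
            (Nat.card ((K × Multiplicative ℤ) →* H) : ℚ) / (Nat.card G : ℚ) * μ H := by
          rw [Finset.mul_sum]
          refine Finset.sum_congr rfl (fun H _ => ?_)
          rw [Finset.sum_ite, Finset.sum_const, Finset.sum_const_zero, add_zero,
            nsmul_eq_mul]
          have hcard : ((Finset.univ.filter
              (fun φ : (K × Multiplicative ℤ) →* G => φ.range ≤ H)).card : ℚ)
              = (Nat.card ((K × Multiplicative ℤ) →* H) : ℚ) := by
            rw [← card_hom_range_le (K × Multiplicative ℤ) G H, Nat.card_eq_fintype_card,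
              Fintype.card_subtype]
          rw [hcard]
          ring
  constructor
  · rw [first, finsum_eq_sum_of_fintype]
  · rw [first, finsum_eq_sum_of_fintype]
    refine Finset.sum_congr rfl (fun H _ => ?_)
    rw [card_homZ K H]
    push_cast
    ring
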